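/- Depth does not increase under instantiation and normalization: if Φ ∈ AllParSubst(Par(I)), then depth(nf(IΦ)) ≤ depth(I). -/
import Mathlib


/-- Types over a type alphabet whose constructors are at most unary:
type parameters, nullary constructors and unary constructors. -/
inductive UTy (C : Type) where
  | param : ℕ → UTy C
  | con0 : C → UTy C
  | con1 : C → UTy C → UTy C
deriving DecidableEq

/-- The subtype relation on types (arguments are compared only up to the
minimum of the arities). -/
inductive USub {C : Type} [LE C] : UTy C → UTy C → Prop where
  | param (n : ℕ) : USub (.param n) (.param n)
  | con00 {K L : C} : K ≤ L → USub (.con0 K) (.con0 L)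
  | con01 {K L : C} {τ : UTy C} : K ≤ L → USub (.con0 K) (.con1 L τ)
  | con10 {K L : C} {σ : UTy C} : K ≤ L → USub (.con1 K σ) (.con0 L)
  | con11 {K L : C} {σ τ : UTy C} : K ≤ L → USub σ τ →
      USub (.con1 K σ) (.con1 L τ)

/-- Applying a parameter substitution to a type. -/
def UTy.subst {C : Type} (Φ : ℕ → UTy C) : UTy C → UTy C
  | .param n => Φ n
  | .con0 K => .con0 K
  | .con1 K σ => .con1 K (σ.subst Φ)

/-- The list of type parameters of a type. -/
def UTy.params {C : Type} : UTy C → List ℕ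
  | .param n => [n]
  | .con0 _ => []
  | .con1 _ σ => σ.params

/-- The depth of a type. -/
def UTy.depth {C : Type} : UTy C → ℕ
  | .param _ => 0
  | .con0 _ => 1
  | .con1 _ σ => 1 + σ.depth

/-- The domain of a parameter substitution. -/
def substDom {C : Type} (Φ : ℕ → UTy C) : Set ℕ := {n | Φ n ≠ .param n}

/-- `AllParSubst A` is the set of parameter substitutions `Φ` with
`dom(Φ) ⊆ A`, `depth(Φ) ≤ 1`, and `Par(αΦ) ⊆ {α}` but `αΦ ≠ α`
for all `α ∈ A`. -/
def AllParSubst {C : Type} (A : Set ℕ) : Set (ℕ → UTy C) :=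
  {Φ | substDom Φ ⊆ A ∧ (∀ m ∈ substDom Φ, (Φ m).depth ≤ 1) ∧
    ∀ a ∈ A, (∀ n ∈ (Φ a).params, n = a) ∧ Φ a ≠ .param a}

/-- A type inequation `σ ⪯ τ`. -/
abbrev UIneq (C : Type) := UTy C × UTy C

/-- A system of type inequations is solvable. -/
def USolvable {C : Type} [LE C] (I : Set (UIneq C)) : Prop :=
  ∃ Φ : ℕ → UTy C, ∀ p ∈ I, USub (p.1.subst Φ) (p.2.subst Φ)

/-- The set of type parameters of a system of type inequations. -/
def sysParams {C : Type} (I : Set (UIneq C)) : Set ℕ :=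
  {n | ∃ p ∈ I, n ∈ p.1.params ∨ n ∈ p.2.params}

/-- Applying a parameter substitution to a system of type inequations. -/
def applySys {C : Type} (Φ : ℕ → UTy C) (I : Set (UIneq C)) : Set (UIneq C) :=
  (fun p : UIneq C => (p.1.subst Φ, p.2.subst Φ)) '' I

/-- The possible results of normalizing a type inequation: `true`, `false`,
or an inequation. -/
inductive NFr (C : Type) where
  | isTrue : NFr C
  | isFalse : NFr C
  | ineq : UTy C → UTy C → NFr C

open Classical in
/-- The normal form `nf(σ ⪯ τ)` of a type inequation. -/
noncomputable def nf {C : Type} [LE C] : UTy C → UTy C → NFr C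
  | .param a, τ => .ineq (.param a) τ
  | σ, .param a => .ineq σ (.param a)
  | .con0 K, .con0 L => if K ≤ L then .isTrue else .isFalse
  | .con0 K, .con1 L _ => if K ≤ L then .isTrue else .isFalse
  | .con1 K _, .con0 L => if K ≤ L then .isTrue else .isFalse
  | .con1 K σ, .con1 L τ => if K ≤ L then nf σ τ else .isFalse

open Classical in
/-- Normalizing a system of type inequations: each inequation is replaced by
its normal form, inequations equivalent to `true` are discarded, and if some
inequation is equivalent to `false` the whole system collapses to the
unsolvable system (represented by `none`). -/
noncomputable def nfSys {C : Type} [LE C] (I : Set (UIneq C)) :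
    Option (Set (UIneq C)) :=
  if ∃ p ∈ I, nf p.1 p.2 = NFr.isFalse then none
  else some {q | ∃ p ∈ I, nf p.1 p.2 = NFr.ineq q.1 q.2}


private lemma UTy.depth_subst_le {C : Type} (Φ : ℕ → UTy C) (τ : UTy C)
    (h : ∀ a ∈ τ.params, (Φ a).depth ≤ 1) :
    (τ.subst Φ).depth ≤ τ.depth + 1 := by
  induction τ with
  | param n => simpa [UTy.subst, UTy.depth] using h n (by simp [UTy.params])
  | con0 K => simp [UTy.subst, UTy.depth]
  | con1 K σ ih =>
    have := ih (fun a ha => h a (by simpa [UTy.params] using ha))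
    simp only [UTy.subst, UTy.depth]
    omega

private lemma good_shape {C : Type} (Φ : ℕ → UTy C) (a : ℕ)
    (h1 : Φ a ≠ .param a) (h2 : ∀ n ∈ (Φ a).params, n = a)
    (h3 : (Φ a).depth ≤ 1) :
    (∃ K, Φ a = .con0 K) ∨ ∃ K, Φ a = .con1 K (.param a) := by
  cases hφ : Φ a with
  | param n =>
    have : n = a := h2 n (by simp [hφ, UTy.params])
    exact absurd (hφ.trans (by rw [this])) h1
  | con0 K => exact Or.inl ⟨K, rfl⟩
  | con1 K x =>
    right
    refine ⟨K, ?_⟩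
    have hx : x.depth = 0 := by
      rw [hφ] at h3; simp [UTy.depth] at h3; omega
    cases x with
    | param m =>
      have : m = a := h2 m (by simp [hφ, UTy.params])
      rw [this]
    | con0 L => simp [UTy.depth] at hx
    | con1 L y => simp [UTy.depth] at hx

private lemma nf_param_right {C : Type} [PartialOrder C] (x : UTy C) (b : ℕ) :
    nf x (.param b) = .ineq x (.param b) := by
  cases x <;> simp [nf]

private lemma nf_subst_depth {C : Type} [PartialOrder C] (Φ : ℕ → UTy C)
    (σ : UTy C) : ∀ τ : UTy C,
    (∀ a ∈ σ.params, Φ a ≠ .param a ∧ (∀ n ∈ (Φ a).params, n = a) ∧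
      (Φ a).depth ≤ 1) →
    (∀ a ∈ τ.params, Φ a ≠ .param a ∧ (∀ n ∈ (Φ a).params, n = a) ∧
      (Φ a).depth ≤ 1) →
    ∀ q1 q2, nf (σ.subst Φ) (τ.subst Φ) = .ineq q1 q2 →
      max q1.depth q2.depth ≤ max σ.depth τ.depth := by
  induction σ with
  | param a =>
    intro τ hσ hτ q1 q2 hnf
    obtain ⟨ha1, ha2, ha3⟩ := hσ a (by simp [UTy.params])
    rcases good_shape Φ a ha1 ha2 ha3 with ⟨K, hK⟩ | ⟨K, hK⟩
    · cases τ with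
      | param b =>
        obtain ⟨hb1, hb2, hb3⟩ := hτ b (by simp [UTy.params])
        rcases good_shape Φ b hb1 hb2 hb3 with ⟨L, hL⟩ | ⟨L, hL⟩ <;>
          simp only [UTy.subst, hK, hL, nf] at hnf <;> split at hnf <;> cases hnf
      | con0 L =>
        simp only [UTy.subst, hK, nf] at hnf; split at hnf <;> cases hnf
      | con1 L τ' =>
        simp only [UTy.subst, hK, nf] at hnf; split at hnf <;> cases hnf
    · cases τ with
      | param b =>
        obtain ⟨hb1, hb2, hb3⟩ := hτ b (by simp [UTy.params])
        rcases good_shape Φ b hb1 hb2 hb3 with ⟨L, hL⟩ | ⟨L, hL⟩ <;>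
          simp only [UTy.subst, hK, hL, nf] at hnf <;> split at hnf <;>
          (cases hnf <;> exact le_rfl)
      | con0 L =>
        simp only [UTy.subst, hK, nf] at hnf; split at hnf <;> cases hnf
      | con1 L τ' =>
        simp only [UTy.subst, hK, nf] at hnf
        split at hnf
        · try simp only [nf] at hnf
          cases hnf
          have := UTy.depth_subst_le Φ τ'
            (fun a ha => (hτ a (by simpa [UTy.params] using ha)).2.2)
          simp only [UTy.depth]
          omega
        · cases hnf
  | con0 K =>
    intro τ hσ hτ q1 q2 hnf
    cases τ with
    | param b =>
      obtain ⟨hb1, hb2, hb3⟩ := hτ b (by simp [UTy.params])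
      rcases good_shape Φ b hb1 hb2 hb3 with ⟨L, hL⟩ | ⟨L, hL⟩ <;>
        simp only [UTy.subst, hL, nf] at hnf <;> split at hnf <;> cases hnf
    | con0 L =>
      simp only [UTy.subst, nf] at hnf; split at hnf <;> cases hnf
    | con1 L τ' =>
      simp only [UTy.subst, nf] at hnf; split at hnf <;> cases hnf
  | con1 K σ' ih =>
    intro τ hσ hτ q1 q2 hnf
    cases τ with
    | param b =>
      obtain ⟨hb1, hb2, hb3⟩ := hτ b (by simp [UTy.params])
      rcases good_shape Φ b hb1 hb2 hb3 with ⟨L, hL⟩ | ⟨L, hL⟩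
      · simp only [UTy.subst, hL, nf] at hnf; split at hnf <;> cases hnf
      · simp only [UTy.subst, hL, nf] at hnf
        split at hnf
        · rw [nf_param_right] at hnf
          cases hnf
          have := UTy.depth_subst_le Φ σ'
            (fun a ha => (hσ a (by simpa [UTy.params] using ha)).2.2)
          simp only [UTy.depth]
          omega
        · cases hnf
    | con0 L =>
      simp only [UTy.subst, nf] at hnf; split at hnf <;> cases hnf
    | con1 L τ' =>
      simp only [UTy.subst, nf] at hnf
      split at hnf
      · have := ih τ' (fun a ha => hσ a (by simpa [UTy.params] using ha))
          (fun a ha => hτ a (by simpa [UTy.params] using ha)) q1 q2 hnf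
        simp only [UTy.depth]
        omega
      · cases hnf

/-- depth does not increase under instantiation and
normalization: if `Φ ∈ AllParSubst(Par I)` and every inequation of `I` has
depth at most `d`, then every inequation of `nf(IΦ)` has depth at most `d`
(the failed system `{false}` has depth `0` by definition). -/
theorem depth_nf_inst_le {C : Type} [PartialOrder C] (I : Set (UIneq C))
    (Φ : ℕ → UTy C) (hΦ : Φ ∈ AllParSubst (C := C) (sysParams I))
    (d : ℕ) (hd : ∀ p ∈ I, max p.1.depth p.2.depth ≤ d) :
    ∀ J : Set (UIneq C), nfSys (applySys Φ I) = some J →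
      ∀ q ∈ J, max q.1.depth q.2.depth ≤ d:= by
  intro J hJ q hq
  obtain ⟨hdom, hdep, hpar⟩ := hΦ
  rw [nfSys] at hJ
  split at hJ
  · cases hJ
  · cases hJ
    obtain ⟨p, hp, hnf⟩ := hq
    obtain ⟨r, hr, rfl⟩ := hp
    have good : ∀ a, a ∈ r.1.params ∨ a ∈ r.2.params →
        Φ a ≠ .param a ∧ (∀ n ∈ (Φ a).params, n = a) ∧ (Φ a).depth ≤ 1 := by
      intro a ha
      have haI : a ∈ sysParams I := ⟨r, hr, ha⟩
      obtain ⟨h2, h1⟩ := hpar a haI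
      refine ⟨h1, h2, hdep a h1⟩
    have := nf_subst_depth Φ r.1 r.2 (fun a ha => good a (Or.inl ha))
      (fun a ha => good a (Or.inr ha)) q.1 q.2 hnf
    exact le_trans this (hd r hr)
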